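/- Let k ≥ 1 and S(x) = x₁² + x₂² - x₃². On the region {x : S(x) > 0, (x₁,x₂) ≠ 0}, define φ^k_±(x) := (x₁ ∓ i x₂)^{-k} S(x)^{k - 1/2} e^{-π S(x)}. With Ĥ₀ = -2i(x₁∂₂ - x₂∂₁) and Ŷ_± = -(x₁ ± ix₂)∂₃ - x₃(∂₁ ± i∂₂), one has Ĥ₀ φ^k_± = ±2k φ^k_±, Ŷ₋ φ^k_+ = 0, and Ŷ₊ φ^k_- = 0. -/

import Mathlib

open Real Complex

/-- Partial derivative of a complex-valued function in the `j`-th coordinate direction. -/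
noncomputable def pdC {n : ℕ} (j : Fin n) (f : (Fin n → ℝ) → ℂ) : (Fin n → ℝ) → ℂ :=
  fun x => fderiv ℝ f x (Pi.single j 1)

/-- `S(x) = x₁² + x₂² - x₃²`. -/
noncomputable def qf3 (x : Fin 3 → ℝ) : ℝ := x 0 ^ 2 + x 1 ^ 2 - x 2 ^ 2

/-- The Rallis–Schiffmann function `φ^k₊(x) = (x₁ - ix₂)^{-k} S(x)^{k-1/2} e^{-πS(x)}`. -/
noncomputable def rsPlus (k : ℕ) : (Fin 3 → ℝ) → ℂ :=
  fun x => ((x 0 : ℂ) - Complex.I * (x 1 : ℂ)) ^ (-(k : ℤ)) *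
    ((qf3 x ^ ((k : ℝ) - 1 / 2) : ℝ) : ℂ) * ((Real.exp (-π * qf3 x) : ℝ) : ℂ)

/-- The Rallis–Schiffmann function `φ^k₋(x) = (x₁ + ix₂)^{-k} S(x)^{k-1/2} e^{-πS(x)}`. -/
noncomputable def rsMinus (k : ℕ) : (Fin 3 → ℝ) → ℂ :=
  fun x => ((x 0 : ℂ) + Complex.I * (x 1 : ℂ)) ^ (-(k : ℤ)) *
    ((qf3 x ^ ((k : ℝ) - 1 / 2) : ℝ) : ℂ) * ((Real.exp (-π * qf3 x) : ℝ) : ℂ)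

/-- `Ĥ₀ = -2i(x₁∂₂ - x₂∂₁)` applied to `φ`. -/
noncomputable def H0op (φ : (Fin 3 → ℝ) → ℂ) : (Fin 3 → ℝ) → ℂ :=
  fun x => -2 * Complex.I * ((x 0 : ℂ) * pdC 1 φ x - (x 1 : ℂ) * pdC 0 φ x)

/-- `Ŷ₊ = -(x₁ + ix₂)∂₃ - x₃(∂₁ + i∂₂)` applied to `φ`. -/
noncomputable def Yplus (φ : (Fin 3 → ℝ) → ℂ) : (Fin 3 → ℝ) → ℂ :=
  fun x => -(((x 0 : ℂ) + Complex.I * (x 1 : ℂ)) * pdC 2 φ x) -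
    (x 2 : ℂ) * (pdC 0 φ x + Complex.I * pdC 1 φ x)

/-- `Ŷ₋ = -(x₁ - ix₂)∂₃ - x₃(∂₁ - i∂₂)` applied to `φ`. -/
noncomputable def Yminus (φ : (Fin 3 → ℝ) → ℂ) : (Fin 3 → ℝ) → ℂ :=
  fun x => -(((x 0 : ℂ) - Complex.I * (x 1 : ℂ)) * pdC 2 φ x) -
    (x 2 : ℂ) * (pdC 0 φ x - Complex.I * pdC 1 φ x)


/-- Common generalization `(x₁ + εix₂)^{-k} S(x)^{k-1/2} e^{-πS(x)}` of `rsPlus` (`ε = -1`)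
and `rsMinus` (`ε = 1`). -/
noncomputable def rsGen (k : ℕ) (ε : ℂ) : (Fin 3 → ℝ) → ℂ :=
  fun x => ((x 0 : ℂ) + ε * Complex.I * (x 1 : ℂ)) ^ (-(k : ℤ)) *
    ((qf3 x ^ ((k : ℝ) - 1 / 2) : ℝ) : ℂ) * ((Real.exp (-π * qf3 x) : ℝ) : ℂ)

lemma rsPlus_eq_rsGen (k : ℕ) : rsPlus k = rsGen k (-1) := by
  funext y
  have hb : ((y 0 : ℂ) - Complex.I * (y 1 : ℂ)) = ((y 0 : ℂ) + (-1) * Complex.I * (y 1 : ℂ)) := by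
    ring
  simp only [rsPlus, rsGen, hb]

lemma rsMinus_eq_rsGen (k : ℕ) : rsMinus k = rsGen k 1 := by
  funext y
  have hb : ((y 0 : ℂ) + Complex.I * (y 1 : ℂ)) = ((y 0 : ℂ) + 1 * Complex.I * (y 1 : ℂ)) := by
    ring
  simp only [rsMinus, rsGen, hb]

lemma pd_rsGen (k : ℕ) (ε : ℂ) (x : Fin 3 → ℝ) (hS : 0 < qf3 x)
    (hz : ((x 0 : ℂ) + ε * Complex.I * (x 1 : ℂ)) ≠ 0) (j : Fin 3) :
    pdC j (rsGen k ε) x =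
      ((-(k : ℤ) : ℂ) * ((x 0 : ℂ) + ε * Complex.I * (x 1 : ℂ)) ^ (-(k : ℤ) - 1) *
          (![1, ε * Complex.I, 0] j)) *
        ((qf3 x ^ ((k : ℝ) - 1 / 2) : ℝ) : ℂ) * ((Real.exp (-π * qf3 x) : ℝ) : ℂ)
      + ((x 0 : ℂ) + ε * Complex.I * (x 1 : ℂ)) ^ (-(k : ℤ)) *
          (((((k : ℝ) - 1 / 2) * qf3 x ^ ((k : ℝ) - 1 / 2 - 1)) : ℝ) : ℂ) *
          ((![2 * x 0, 2 * x 1, -(2 * x 2)] j : ℝ) : ℂ) *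
        ((Real.exp (-π * qf3 x) : ℝ) : ℂ)
      + ((x 0 : ℂ) + ε * Complex.I * (x 1 : ℂ)) ^ (-(k : ℤ)) *
          ((qf3 x ^ ((k : ℝ) - 1 / 2) : ℝ) : ℂ) *
          (((Real.exp (-π * qf3 x) * (-π)) : ℝ) : ℂ) *
          ((![2 * x 0, 2 * x 1, -(2 * x 2)] j : ℝ) : ℂ) := by
  have hp : ∀ i : Fin 3, HasFDerivAt (fun y : Fin 3 → ℝ => y i)
      (ContinuousLinearMap.proj (R := ℝ) (φ := fun _ : Fin 3 => ℝ) i) x := fun i =>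
    (ContinuousLinearMap.proj (R := ℝ) (φ := fun _ : Fin 3 => ℝ) i).hasFDerivAt
  have hp0 := hp 0
  have hp1 := hp 1
  have hc0 : HasFDerivAt (fun y : Fin 3 → ℝ => ((y 0 : ℝ) : ℂ))
      (Complex.ofRealCLM.comp (ContinuousLinearMap.proj 0)) x :=
    Complex.ofRealCLM.hasFDerivAt.comp x hp0
  have hc1 : HasFDerivAt (fun y : Fin 3 → ℝ => ((y 1 : ℝ) : ℂ))
      (Complex.ofRealCLM.comp (ContinuousLinearMap.proj 1)) x :=
    Complex.ofRealCLM.hasFDerivAt.comp x hp1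
  have hzf : HasFDerivAt (fun y : Fin 3 → ℝ => (y 0 : ℂ) + ε * Complex.I * (y 1 : ℂ))
      (Complex.ofRealCLM.comp (ContinuousLinearMap.proj 0)
        + (ε * Complex.I) • Complex.ofRealCLM.comp (ContinuousLinearMap.proj 1)) x :=
    hc0.add (hc1.const_mul (ε * Complex.I))
  have hZ := (hasDerivAt_zpow (-(k : ℤ)) _ (Or.inl hz)).comp_hasFDerivAt x hzf
  have hsq : ∀ i : Fin 3, HasFDerivAt (fun y : Fin 3 → ℝ => y i ^ 2)
      ((2 * x i) • ContinuousLinearMap.proj (R := ℝ) (φ := fun _ : Fin 3 => ℝ) i) x := by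
    intro i
    have h := (hp i).mul (hp i)
    have he : (fun y : Fin 3 → ℝ => y i ^ 2) = fun y => y i * y i := by funext y; ring
    rw [he]
    refine h.congr_fderiv ?_
    ext v
    simp [two_mul]
    ring
  have hqf : HasFDerivAt qf3
      ((2 * x 0) • (ContinuousLinearMap.proj 0 : (Fin 3 → ℝ) →L[ℝ] ℝ)
        + (2 * x 1) • ContinuousLinearMap.proj 1
        - (2 * x 2) • ContinuousLinearMap.proj 2) x :=
    ((hsq 0).add (hsq 1)).sub (hsq 2)
  have hSr := (Real.hasDerivAt_rpow_const (p := (k : ℝ) - 1 / 2)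
      (Or.inl hS.ne')).comp_hasFDerivAt x hqf
  have hSrC := Complex.ofRealCLM.hasFDerivAt.comp x hSr
  have hexp : HasDerivAt (fun s : ℝ => Real.exp (-π * s))
      (Real.exp (-π * qf3 x) * (-π)) (qf3 x) := by
    have h1 : HasDerivAt (fun s : ℝ => -π * s) (-π) (qf3 x) := by
      simpa using (hasDerivAt_id (qf3 x)).const_mul (-π)
    exact (Real.hasDerivAt_exp _).comp _ h1
  have hE := hexp.comp_hasFDerivAt x hqf
  have hEC := Complex.ofRealCLM.hasFDerivAt.comp x hE
  have hprod := (hZ.mul hSrC).mul hEC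
  have hfd : pdC j (rsGen k ε) x = _ := congrArg (fun L => L (Pi.single j 1)) hprod.fderiv
  rw [hfd]
  fin_cases j <;>
    simp [Pi.single_apply, Fin.ext_iff, ContinuousLinearMap.proj_apply] <;>
    push_cast <;> ring

/-- On the region `S(x) > 0`, `(x₁,x₂) ≠ 0`, one has `Ĥ₀φ^k_± = ±2kφ^k_±`, `Ŷ₋φ^k₊ = 0`,
and `Ŷ₊φ^k₋ = 0`. -/
theorem rallis_schiffmann_weights (k : ℕ) (hk : 1 ≤ k) (x : Fin 3 → ℝ)
    (hS : 0 < qf3 x) (hx : ¬(x 0 = 0 ∧ x 1 = 0)) :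
    H0op (rsPlus k) x = 2 * (k : ℂ) * rsPlus k x ∧
    H0op (rsMinus k) x = -2 * (k : ℂ) * rsMinus k x ∧
    Yminus (rsPlus k) x = 0 ∧
    Yplus (rsMinus k) x = 0 := by
  have hzP : ((x 0 : ℂ) + (-1) * Complex.I * (x 1 : ℂ)) ≠ 0 := by
    intro h
    rw [Complex.ext_iff] at h
    simp at h
    exact hx ⟨h.1, h.2⟩
  have hzM : ((x 0 : ℂ) + 1 * Complex.I * (x 1 : ℂ)) ≠ 0 := by
    intro h
    rw [Complex.ext_iff] at h
    simp at h
    exact hx ⟨h.1, h.2⟩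
  have hzzP : ((x 0 : ℂ) + (-1) * Complex.I * (x 1 : ℂ)) ^ (-(k : ℤ)) =
      ((x 0 : ℂ) + (-1) * Complex.I * (x 1 : ℂ)) ^ (-(k : ℤ) - 1) *
        ((x 0 : ℂ) + (-1) * Complex.I * (x 1 : ℂ)) := by
    rw [← zpow_add_one₀ hzP]; norm_num
  have hzzM : ((x 0 : ℂ) + 1 * Complex.I * (x 1 : ℂ)) ^ (-(k : ℤ)) =
      ((x 0 : ℂ) + 1 * Complex.I * (x 1 : ℂ)) ^ (-(k : ℤ) - 1) *
        ((x 0 : ℂ) + 1 * Complex.I * (x 1 : ℂ)) := by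
    rw [← zpow_add_one₀ hzM]; norm_num
  refine ⟨?_, ?_, ?_, ?_⟩
  · rw [rsPlus_eq_rsGen]
    simp only [H0op, rsGen, pd_rsGen k (-1) x hS hzP 0, pd_rsGen k (-1) x hS hzP 1,
      Matrix.cons_val_zero, Matrix.cons_val_one, Matrix.head_cons]
    rw [hzzP]
    push_cast
    linear_combination (-2 * (k : ℂ) * ((x 0 : ℂ) + (-1) * Complex.I * (x 1 : ℂ)) ^ (-(k : ℤ) - 1) *
      ((qf3 x ^ ((k : ℝ) - 1 / 2) : ℝ) : ℂ) * Complex.exp (-(π : ℂ) * (qf3 x : ℂ)) * (x 0 : ℂ)) *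
      Complex.I_sq
  · rw [rsMinus_eq_rsGen]
    simp only [H0op, rsGen, pd_rsGen k 1 x hS hzM 0, pd_rsGen k 1 x hS hzM 1,
      Matrix.cons_val_zero, Matrix.cons_val_one, Matrix.head_cons]
    rw [hzzM]
    push_cast
    linear_combination (2 * (k : ℂ) * ((x 0 : ℂ) + 1 * Complex.I * (x 1 : ℂ)) ^ (-(k : ℤ) - 1) *
      ((qf3 x ^ ((k : ℝ) - 1 / 2) : ℝ) : ℂ) * Complex.exp (-(π : ℂ) * (qf3 x : ℂ)) * (x 0 : ℂ)) *
      Complex.I_sq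
  · rw [rsPlus_eq_rsGen]
    simp only [Yminus, rsGen, pd_rsGen k (-1) x hS hzP 0, pd_rsGen k (-1) x hS hzP 1,
      pd_rsGen k (-1) x hS hzP 2,
      Matrix.cons_val_zero, Matrix.cons_val_one, Matrix.head_cons, Matrix.cons_val_two,
      Matrix.tail_cons]
    rw [hzzP]
    push_cast
    linear_combination ((x 2 : ℂ) * (k : ℂ) *
      ((x 0 : ℂ) + (-1) * Complex.I * (x 1 : ℂ)) ^ (-(k : ℤ) - 1) *
      ((qf3 x ^ ((k : ℝ) - 1 / 2) : ℝ) : ℂ) * Complex.exp (-(π : ℂ) * (qf3 x : ℂ))) *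
      Complex.I_sq
  · rw [rsMinus_eq_rsGen]
    simp only [Yplus, rsGen, pd_rsGen k 1 x hS hzM 0, pd_rsGen k 1 x hS hzM 1,
      pd_rsGen k 1 x hS hzM 2,
      Matrix.cons_val_zero, Matrix.cons_val_one, Matrix.head_cons, Matrix.cons_val_two,
      Matrix.tail_cons]
    rw [hzzM]
    push_cast
    linear_combination ((x 2 : ℂ) * (k : ℂ) *
      ((x 0 : ℂ) + 1 * Complex.I * (x 1 : ℂ)) ^ (-(k : ℤ) - 1) *
      ((qf3 x ^ ((k : ℝ) - 1 / 2) : ℝ) : ℂ) * Complex.exp (-(π : ℂ) * (qf3 x : ℂ))) *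
      Complex.I_sq
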